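/- (Uniqueness in noiseless case via CMSV) Let q ∈ (1,∞) and A ∈ R^{m×N} with ρ_{q,3^{q/(q−1)}k}(A) > 0. Then for any nonzero k-sparse x ∈ R^N, the unique solution of min ‖z‖₁/‖z‖_q subject to Az = Ax is x itself. -/

import Mathlib

open Finset

/-- The `ℓ_q` quasi-norm `(∑ |z i|^q)^(1/q)` on `Fin N → ℝ`. -/
noncomputable def lqNorm {N : ℕ} (q : ℝ) (z : Fin N → ℝ) : ℝ :=
  (∑ i, |z i| ^ q) ^ (1 / q)

/-- The `ℓ_1` norm. -/
noncomputable def l1Norm {N : ℕ} (z : Fin N → ℝ) : ℝ := ∑ i, |z i|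

/-- The `ℓ_2` norm. -/
noncomputable def l2Norm {N : ℕ} (z : Fin N → ℝ) : ℝ := Real.sqrt (∑ i, (z i) ^ 2)

/-- The `q`-ratio sparsity `s_q(z) = (‖z‖₁/‖z‖_q)^(q/(q-1))`. -/
noncomputable def qSparsity {N : ℕ} (q : ℝ) (z : Fin N → ℝ) : ℝ :=
  (l1Norm z / lqNorm q z) ^ (q / (q - 1))

/-- Number of nonzero entries. -/
noncomputable def l0Norm {N : ℕ} (z : Fin N → ℝ) : ℕ :=
  (Finset.univ.filter fun i => z i ≠ 0).card

/-- Restriction of `z` to an index set `S` (zero outside `S`). -/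
noncomputable def restr {N : ℕ} (z : Fin N → ℝ) (S : Finset (Fin N)) : Fin N → ℝ :=
  fun i => if i ∈ S then z i else 0

lemma lqNorm_nonneg {N : ℕ} (q : ℝ) (z : Fin N → ℝ) : 0 ≤ lqNorm q z :=
  Real.rpow_nonneg (Finset.sum_nonneg fun _ _ => Real.rpow_nonneg (abs_nonneg _) q) _

lemma lqNorm_pos {N : ℕ} (q : ℝ) {z : Fin N → ℝ} (hz : z ≠ 0) :
    0 < lqNorm q z := by
  obtain ⟨i, hi⟩ := Function.ne_iff.mp hz
  have h1 : (0:ℝ) < |z i| ^ q := Real.rpow_pos_of_pos (abs_pos.mpr hi) q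
  have h2 : (0:ℝ) < ∑ j, |z j| ^ q :=
    lt_of_lt_of_le h1 (Finset.single_le_sum
      (fun j _ => Real.rpow_nonneg (abs_nonneg _) q) (mem_univ i))
  exact Real.rpow_pos_of_pos h2 _

lemma holder_restr {N : ℕ} {q : ℝ} (hq : 1 < q) (S : Finset (Fin N)) (h : Fin N → ℝ) :
    ∑ i ∈ S, |h i| ≤ (S.card : ℝ) ^ (1 - 1/q) * lqNorm q h := by
  have hq0 : (0:ℝ) < q := lt_trans one_pos hq
  have hpq : (q / (q-1)).HolderConjugate q := (Real.HolderConjugate.conjExponent hq).symm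
  have key := Real.inner_le_Lp_mul_Lq S (fun _ => (1:ℝ)) (fun i => |h i|) hpq
  simp only [one_mul, abs_abs, abs_one, Real.one_rpow, Finset.sum_const, nsmul_eq_mul,
    mul_one] at key
  have e1 : 1 / (q/(q-1)) = 1 - 1/q := by
    rw [one_div_div]; field_simp
  rw [e1] at key
  refine key.trans (mul_le_mul_of_nonneg_left ?_ (Real.rpow_nonneg (Nat.cast_nonneg _) _))
  unfold lqNorm
  apply Real.rpow_le_rpow (Finset.sum_nonneg fun i _ => Real.rpow_nonneg (abs_nonneg _) q)
  · exact Finset.sum_le_sum_of_subset_of_nonneg (Finset.subset_univ S)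
      (fun i _ _ => Real.rpow_nonneg (abs_nonneg _) q)
  · positivity

theorem noiseless_uniqueness_via_CMSV {m N : ℕ} (A : Matrix (Fin m) (Fin N) ℝ)
    (q : ℝ) (hq : 1 < q) (k : ℕ) (ρ : ℝ) (hρpos : 0 < ρ)
    (hρ : ∀ z : Fin N → ℝ, z ≠ 0 → qSparsity q z ≤ (3 : ℝ) ^ (q / (q - 1)) * (k : ℝ) →
      ρ ≤ l2Norm (A.mulVec z) / lqNorm q z) :
    ∀ x : Fin N → ℝ, x ≠ 0 → l0Norm x ≤ k →
      ∀ z : Fin N → ℝ, z ≠ 0 → A.mulVec z = A.mulVec x → z ≠ x →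
        l1Norm x / lqNorm q x < l1Norm z / lqNorm q z := by
  intro x hx hxk z hz hAzx hzx
  by_contra hcon
  push_neg at hcon
  have hq0 : (0:ℝ) < q := lt_trans one_pos hq
  have hq1 : q - 1 ≠ 0 := sub_ne_zero.mpr (ne_of_gt hq)
  set h : Fin N → ℝ := z - x with hh
  have hne : h ≠ 0 := sub_ne_zero.mpr hzx
  set S : Finset (Fin N) := Finset.univ.filter (fun i => x i ≠ 0) with hSdef
  have hcard : (S.card : ℝ) ≤ (k : ℝ) := Nat.cast_le.mpr hxk
  set c : ℝ := (k:ℝ) ^ (1 - 1/q) with hc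
  have hexp0 : 0 ≤ 1 - 1/q := by
    have : 1/q < 1 := by rw [div_lt_one hq0]; exact hq
    linarith
  have hcnn : 0 ≤ c := Real.rpow_nonneg (Nat.cast_nonneg _) _
  have hcard_c : ((S.card : ℝ)) ^ (1 - 1/q) ≤ c :=
    Real.rpow_le_rpow (Nat.cast_nonneg _) hcard hexp0
  have Hq := lqNorm_pos q hne
  have Xq := lqNorm_pos q hx
  have Zq := lqNorm_pos q hz
  -- Hölder bounds
  have hS_h : ∑ i ∈ S, |h i| ≤ c * lqNorm q h :=
    (holder_restr hq S h).trans
      (mul_le_mul_of_nonneg_right hcard_c (lqNorm_nonneg q h))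
  -- l1Norm x equals sum over S
  have hX1 : l1Norm x = ∑ i ∈ S, |x i| := by
    unfold l1Norm
    rw [← Finset.sum_filter_add_sum_filter_not Finset.univ (fun i => x i ≠ 0)]
    have : ∑ i ∈ Finset.univ.filter (fun i => ¬ x i ≠ 0), |x i| = 0 := by
      apply Finset.sum_eq_zero
      intro i hi
      simp only [Finset.mem_filter, not_not] at hi
      simp [hi.2]
    rw [hSdef, this, add_zero]
  have hXc : l1Norm x ≤ c * lqNorm q x := by
    rw [hX1]
    exact (holder_restr hq S x).trans
      (mul_le_mul_of_nonneg_right hcard_c (lqNorm_nonneg q x))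
  -- split of l1 norms over S and complement
  have hzsplit : l1Norm z = (∑ i ∈ S, |z i|) + ∑ i ∈ Sᶜ, |z i| := by
    unfold l1Norm
    rw [← Finset.sum_add_sum_compl S]
  have hhsplit : l1Norm h = (∑ i ∈ S, |h i|) + ∑ i ∈ Sᶜ, |h i| := by
    unfold l1Norm
    rw [← Finset.sum_add_sum_compl S]
  -- lower bound on l1Norm z
  have hlow : (∑ i ∈ S, |x i|) - (∑ i ∈ S, |h i|) + ∑ i ∈ Sᶜ, |h i| ≤ l1Norm z := by
    rw [hzsplit]
    have h1 : (∑ i ∈ S, |x i|) - (∑ i ∈ S, |h i|) ≤ ∑ i ∈ S, |z i| := by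
      rw [sub_le_iff_le_add, ← Finset.sum_add_distrib]
      apply Finset.sum_le_sum
      intro i _
      have : x i = z i - h i := by simp [hh]
      rw [this]
      exact (abs_sub _ _)
    have h2 : ∑ i ∈ Sᶜ, |h i| ≤ ∑ i ∈ Sᶜ, |z i| := by
      apply Finset.sum_le_sum
      intro i hi
      have hxi : x i = 0 := by
        simp only [hSdef, Finset.mem_compl, Finset.mem_filter, Finset.mem_univ,
          true_and, not_not] at hi
        exact hi
      have : h i = z i := by simp [hh, hxi]
      rw [this]
    linarith
  -- Minkowski
  have hmink : lqNorm q z ≤ lqNorm q x + lqNorm q h := by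
    have hz_eq : ∀ i, z i = x i + h i := by intro i; simp [hh]
    have := Real.Lp_add_le Finset.univ x h (le_of_lt hq)
    unfold lqNorm
    calc (∑ i, |z i| ^ q) ^ (1/q) = (∑ i, |x i + h i| ^ q) ^ (1/q) := by
          congr 1; apply Finset.sum_congr rfl; intro i _; rw [hz_eq i]
      _ ≤ _ := this
  -- upper bound on l1Norm z from the contradiction hypothesis
  have hZ1 : l1Norm z ≤ l1Norm x + c * lqNorm q h := by
    have hZle : l1Norm z ≤ (l1Norm x / lqNorm q x) * lqNorm q z := by
      rw [div_le_div_iff₀ Zq Xq] at hcon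
      rw [div_mul_eq_mul_div, le_div_iff₀ Xq]
      linarith
    have hratio : l1Norm x / lqNorm q x ≤ c := by
      rw [div_le_iff₀ Xq]; exact hXc
    have hrnn : 0 ≤ l1Norm x / lqNorm q x :=
      div_nonneg (Finset.sum_nonneg fun i _ => abs_nonneg _) (le_of_lt Xq)
    calc l1Norm z ≤ (l1Norm x / lqNorm q x) * lqNorm q z := hZle
      _ ≤ (l1Norm x / lqNorm q x) * (lqNorm q x + lqNorm q h) :=
          mul_le_mul_of_nonneg_left hmink hrnn
      _ = (l1Norm x / lqNorm q x) * lqNorm q x + (l1Norm x / lqNorm q x) * lqNorm q h := by ring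
      _ ≤ l1Norm x + c * lqNorm q h := by
          rw [div_mul_cancel₀ _ (ne_of_gt Xq)]
          have := mul_le_mul_of_nonneg_right hratio (le_of_lt Hq)
          linarith
  -- combine: l1Norm h ≤ 3 c lqNorm q h
  have hH1 : l1Norm h ≤ 3 * c * lqNorm q h := by
    have hSc : ∑ i ∈ Sᶜ, |h i| ≤ c * lqNorm q h + ∑ i ∈ S, |h i| := by
      rw [hX1] at hZ1
      linarith
    rw [hhsplit]
    have := hS_h
    linarith
  -- sparsity bound for h
  have hsp : qSparsity q h ≤ (3 : ℝ) ^ (q / (q - 1)) * (k : ℝ) := by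
    unfold qSparsity
    have hdiv : l1Norm h / lqNorm q h ≤ 3 * c := by
      rw [div_le_iff₀ Hq]; exact hH1
    have hdnn : 0 ≤ l1Norm h / lqNorm q h :=
      div_nonneg (Finset.sum_nonneg fun i _ => abs_nonneg _) (le_of_lt Hq)
    have hqq : 0 ≤ q / (q-1) := le_of_lt (div_pos hq0 (by linarith))
    calc (l1Norm h / lqNorm q h) ^ (q/(q-1)) ≤ (3 * c) ^ (q/(q-1)) :=
          Real.rpow_le_rpow hdnn hdiv hqq
      _ = (3:ℝ) ^ (q/(q-1)) * c ^ (q/(q-1)) :=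
          Real.mul_rpow (by norm_num) hcnn
      _ = (3:ℝ) ^ (q/(q-1)) * (k:ℝ) := by
          congr 1
          rw [hc, ← Real.rpow_mul (Nat.cast_nonneg _)]
          have : (1 - 1/q) * (q/(q-1)) = 1 := by field_simp
          rw [this, Real.rpow_one]
  -- apply CMSV hypothesis to h
  have hfin := hρ h hne hsp
  have hA0 : A.mulVec h = 0 := by
    rw [hh, Matrix.mulVec_sub, hAzx, sub_self]
  rw [hA0] at hfin
  have : l2Norm (0 : Fin m → ℝ) = 0 := by
    simp [l2Norm]
  rw [this, zero_div] at hfin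
  linarith
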